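/- Let n = 2m and let C ⊆ {0,1}^{n−1} be a linear code over F₂ (closed under coordinatewise addition) that is closed under cyclic shifts and has minimum Hamming distance d between distinct codewords. For x ∈ C with T_C(x) ≠ ∅, let τ(x) = min T_C(x), let c(x) = Flip_c(σ(x, τ(x))), and let c'(x) ∈ {0,1}^n be c(x) with one bit appended: a 1 if wt(c(x)) = m−1 and a 0 if wt(c(x)) = m. Then every such c'(x) is balanced (has weight exactly m), and for any x, y ∈ C with T_C(x) ≠ ∅ and T_C(y) ≠ ∅, if c'(x) ≠ c'(y) then the Hamming distance between c'(x) and c'(y) is at least 2⌈d/2⌉. -/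

import Mathlib

/-- The Hamming weight of a binary word `x ∈ {0,1}^N`: the number of ones. -/
def wt {N : ℕ} (x : Fin N → Bool) : ℕ :=
  (Finset.univ.filter (fun i => x i = true)).card

/-- `Flip x j` complements the first `j` bits of `x`. -/
def Flip {N : ℕ} (x : Fin N → Bool) (j : ℕ) : Fin N → Bool :=
  fun i => if (i : ℕ) < j then !(x i) else x i

/-- `cyc x i` is the cyclic right shift of `x` by `i` positions. -/
def cyc {N : ℕ} (x : Fin N → Bool) (i : ℕ) : Fin N → Bool :=
  fun j => x ⟨((j : ℕ) + (N - i % N)) % N, Nat.mod_lt _ j.pos⟩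

/-- `j ∈ T_C(x)`: `j ∈ {0,…,n−2}` and `wt(Flip_c(σ(x,j))) ∈ {m−1, m}`,
where `Flip_c` complements the first `m` bits. -/
def TCmem (m : ℕ) (x : Fin (2*m-1) → Bool) (j : ℕ) : Prop :=
  j ≤ 2*m - 2 ∧ (wt (Flip (cyc x j) m) = m - 1 ∨ wt (Flip (cyc x j) m) = m)

/-- Append one bit to `c ∈ {0,1}^{2m−1}`: a `1` if `wt c = m−1`
and a `0` if `wt c = m`. -/
def extend (m : ℕ) (c : Fin (2*m-1) → Bool) : Fin (2*m) → Bool :=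
  fun i => if h : (i : ℕ) < 2*m - 1 then c ⟨i, h⟩ else decide (wt c = m - 1)

/-- if `C ⊆ {0,1}^{n−1}` is linear, closed under cyclic shifts,
and distinct codewords are at Hamming distance at least `d`, then the encoding
`x ↦ c'(x) = extend (Flip_c(σ(x, min T_C(x))))` produces balanced words of
length `n = 2m`, and distinct encoded words are at distance at least `2⌈d/2⌉`. -/
lemma dist_flip {N : ℕ} (a b : Fin N → Bool) (j : ℕ) :
    hammingDist (Flip a j) (Flip b j) = hammingDist a b := by
  unfold hammingDist Flip
  congr 1
  apply Finset.filter_congr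
  intro i _
  by_cases hi : (i:ℕ) < j <;> simp [hi]

lemma dist_parity {N : ℕ} (a b : Fin N → Bool) :
    hammingDist a b % 2 = (wt a + wt b) % 2 := by
  classical
  set A := Finset.univ.filter (fun i => a i = true) with hA
  set B := Finset.univ.filter (fun i => b i = true) with hB
  have hfilter : Finset.univ.filter (fun i => a i ≠ b i) = (A \ B) ∪ (B \ A) := by
    ext i
    simp only [hA, hB, Finset.mem_filter, Finset.mem_union, Finset.mem_sdiff,
      Finset.mem_univ, true_and]
    cases a i <;> cases b i <;> simp
  have hdisj : Disjoint (A \ B) (B \ A) := disjoint_sdiff_sdiff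
  have h1 : (A ∩ B).card + (A \ B).card = A.card := Finset.card_inter_add_card_sdiff A B
  have h2 : (B ∩ A).card + (B \ A).card = B.card := Finset.card_inter_add_card_sdiff B A
  have h3 : (A ∩ B).card = (B ∩ A).card := by rw [Finset.inter_comm]
  have hdist : hammingDist a b = (A \ B).card + (B \ A).card := by
    unfold hammingDist
    rw [show (Finset.filter (fun i => a i ≠ b i) Finset.univ) = (A \ B) ∪ (B \ A) from hfilter]
    exact Finset.card_union_of_disjoint hdisj
  have hwa : wt a = A.card := rfl
  have hwb : wt b = B.card := rfl
  omega

lemma dist_extend_le (m : ℕ) (c c' : Fin (2*m-1) → Bool) :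
    hammingDist c c' ≤ hammingDist (extend m c) (extend m c') := by
  unfold hammingDist
  apply Finset.card_le_card_of_injOn (fun i => Fin.castLE (by omega) i)
  · intro i hi
    simp only [Finset.mem_filter, Finset.mem_univ, true_and] at hi ⊢
    have h : ((Fin.castLE (by omega : 2*m-1 ≤ 2*m) i : Fin (2*m)) : ℕ) < 2*m-1 := i.isLt
    rw [Finset.coe_filter]
    simpa [extend, h] using hi
  · intro i _ j _ h
    exact Fin.castLE_injective _ h

lemma wt_extend (m : ℕ) (hm1 : 1 ≤ m) (c : Fin (2*m-1) → Bool) :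
    wt (extend m c) = wt c + (if wt c = m - 1 then 1 else 0) := by
  have h : 2*m = (2*m-1)+1 := by omega
  unfold wt
  rw [Finset.card_filter, ← Equiv.sum_comp (finCongr h.symm)
      (fun i => if extend m c i = true then 1 else 0)]
  rw [Fin.sum_univ_castSucc]
  have hcast : ∀ i : Fin (2*m-1),
      extend m c (finCongr h.symm i.castSucc) = c i := by
    intro i
    have hh : ((finCongr h.symm i.castSucc : Fin (2*m)) : ℕ) < 2*m-1 := by
      exact i.isLt
    simp [extend, hh]
  have hlast : extend m c (finCongr h.symm (Fin.last (2*m-1))) = decide (wt c = m-1) := by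
    have hh : ¬ ((finCongr h.symm (Fin.last (2*m-1)) : Fin (2*m)) : ℕ) < 2*m-1 := by
      simp
    simp [extend, hh, wt]
  simp only [hcast, hlast]
  rw [← Finset.card_filter]
  simp [wt, decide_eq_true_iff]
  exact if_congr decide_eq_true_iff rfl rfl


theorem stmt15 (m d : ℕ) (C : Set (Fin (2*m-1) → Bool))
    (hlin : ∀ x ∈ C, ∀ y ∈ C, (fun i => xor (x i) (y i)) ∈ C)
    (hcyc : ∀ x ∈ C, ∀ i, cyc x i ∈ C)
    (hd : ∀ x ∈ C, ∀ y ∈ C, x ≠ y → d ≤ hammingDist x y) :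
    ∀ x ∈ C, ∀ τx, (TCmem m x τx ∧ ∀ j, TCmem m x j → τx ≤ j) →
      wt (extend m (Flip (cyc x τx) m)) = m ∧
      ∀ y ∈ C, ∀ τy, (TCmem m y τy ∧ ∀ j, TCmem m y j → τy ≤ j) →
        extend m (Flip (cyc x τx) m) ≠ extend m (Flip (cyc y τy) m) →
        2 * ((d + 1) / 2) ≤
          hammingDist (extend m (Flip (cyc x τx) m)) (extend m (Flip (cyc y τy) m)) := by
  intro x hx τx hτ
  by_cases hm : m = 0
  · subst hm
    constructor
    · simp [wt]
    · intro y hy τy _ hne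
      exact absurd (funext fun i => i.elim0) hne
  have hm1 : 1 ≤ m := by omega
  obtain ⟨⟨-, hwx⟩, -⟩ := hτ
  set cx := Flip (cyc x τx) m with hcx
  have hwtx : wt (extend m cx) = m := by
    rw [wt_extend m hm1]
    rcases hwx with h | h
    · rw [h, if_pos rfl]; omega
    · rw [h, if_neg (by omega)]; omega
  refine ⟨hwtx, ?_⟩
  intro y hy τy hτy hne
  obtain ⟨⟨-, hwy⟩, -⟩ := hτy
  set cy := Flip (cyc y τy) m with hcy
  have hwty : wt (extend m cy) = m := by
    rw [wt_extend m hm1]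
    rcases hwy with h | h
    · rw [h, if_pos rfl]; omega
    · rw [h, if_neg (by omega)]; omega
  have hne' : cx ≠ cy := fun he => hne (congrArg (extend m) he)
  have hxy : cyc x τx ≠ cyc y τy := fun he => hne' (by rw [hcx, hcy, he])
  have hdle : d ≤ hammingDist cx cy := by
    rw [hcx, hcy, dist_flip]
    exact hd _ (hcyc x hx τx) _ (hcyc y hy τy) hxy
  have hdle2 : d ≤ hammingDist (extend m cx) (extend m cy) :=
    le_trans hdle (dist_extend_le m cx cy)
  have hpar : hammingDist (extend m cx) (extend m cy) % 2 = 0 := by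
    rw [dist_parity, hwtx, hwty]; omega
  omega
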